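/- arXiv:gr-qc/0212055 — 2 statements merged into one kernel-verified Lean document; each statement's English description precedes it below -/
import Mathlib

section
/- Let ρ : ℝ² → ℝ be twice continuously differentiable and let L₁₂₁, L₁₂₂ : ℝ² → ℝ be continuously differentiable. Then the pair (L₁₂₁, L₁₂₂) satisfies both equations (E1) −e^{2ρ}∂₁∂₂ρ + 4L₁₂₁∂₂ρ − 4L₁₂₂∂₁ρ − 2∂₂L₁₂₁ + 2∂₁L₁₂₂ = 0 and (E2) 2L₁₂₁∂₂ρ + 2L₁₂₂∂₁ρ − ∂₂L₁₂₁ − ∂₁L₁₂₂ = 0 at every point of ℝ² if and only if there exist functions f₁, f₂ : ℝ → ℝ such that L₁₂₁(x¹,x²) = e^{2ρ(x¹,x²)} f₁(x¹) − (1/4) e^{2ρ(x¹,x²)} ∂₁ρ(x¹,x²) and L₁₂₂(x¹,x²) = e^{2ρ(x¹,x²)} f₂(x²) + (1/4) e^{2ρ(x¹,x²)} ∂₂ρ(x¹,x²) for all (x¹,x²) ∈ ℝ². (This is the general solution of the 2-dimensional Riemann-Lanczos problem with the differential gauge condition imposed: it depends on two arbitrary functions of one independent variable each.) -/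
/-- Partial derivative of `f : ℝ² → ℝ` with respect to the `i`-th coordinate,
taken as the derivative along the corresponding coordinate line. -/
noncomputable def pd (i : Fin 2) (f : (Fin 2 → ℝ) → ℝ) : (Fin 2 → ℝ) → ℝ :=
  fun x => deriv (fun t => f (Function.update x i t)) (x i)

lemma hasDerivAt_update' (x : Fin 2 → ℝ) (i : Fin 2) (t : ℝ) :
    HasDerivAt (fun s => Function.update x i s) (Pi.single i (1:ℝ)) t := by
  have h : (fun s : ℝ => Function.update x i s)
      = fun s => Function.update x i t + (s - t) • (Pi.single i 1 : Fin 2 → ℝ) := by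
    funext s j
    by_cases hj : j = i
    · subst hj; simp
    · simp [Function.update_of_ne hj, Pi.single_eq_of_ne hj]
  rw [h]
  simpa using (((hasDerivAt_id t).sub_const t).smul_const (Pi.single i (1:ℝ))).const_add
    (Function.update x i t)

lemma hasDerivAt_pd {g : (Fin 2 → ℝ) → ℝ} {i : Fin 2} {x : Fin 2 → ℝ} {t : ℝ}
    (hg : DifferentiableAt ℝ g (Function.update x i t)) :
    HasDerivAt (fun s => g (Function.update x i s)) (pd i g (Function.update x i t)) t := by
  have h1 := hg.hasFDerivAt.comp_hasDerivAt t (hasDerivAt_update' x i t)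
  have h2 : pd i g (Function.update x i t)
      = fderiv ℝ g (Function.update x i t) (Pi.single i (1:ℝ)) := by
    unfold pd
    simp only [Function.update_idem, Function.update_self]
    exact h1.deriv
  rw [h2]; exact h1

lemma hasDerivAt_pd' {g : (Fin 2 → ℝ) → ℝ} {i : Fin 2} {x : Fin 2 → ℝ}
    (hg : DifferentiableAt ℝ g x) :
    HasDerivAt (fun s => g (Function.update x i s)) (pd i g x) (x i) := by
  have h := hasDerivAt_pd (g := g) (i := i) (x := x) (t := x i)
    (by rwa [Function.update_eq_self])
  rwa [Function.update_eq_self] at h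

lemma pd_eq_fderiv {g : (Fin 2 → ℝ) → ℝ} {i : Fin 2} {x : Fin 2 → ℝ}
    (hg : DifferentiableAt ℝ g x) :
    pd i g x = fderiv ℝ g x (Pi.single i (1:ℝ)) := by
  have h0 := hg.hasFDerivAt
  rw [← Function.update_eq_self i x] at h0
  have h1 := h0.comp_hasDerivAt (x i) (hasDerivAt_update' x i (x i))
  rw [Function.update_eq_self] at h1
  unfold pd
  exact h1.deriv

lemma contDiff_pd {ρ : (Fin 2 → ℝ) → ℝ} (hρ : ContDiff ℝ 2 ρ) (i : Fin 2) :
    ContDiff ℝ 1 (pd i ρ) := by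
  have hd : Differentiable ℝ ρ := hρ.differentiable two_ne_zero
  have h : pd i ρ = fun x => fderiv ℝ ρ x (Pi.single i (1:ℝ)) :=
    funext fun x => pd_eq_fderiv (hd x)
  rw [h]
  exact (hρ.fderiv_right (le_refl 2)).clm_apply contDiff_const

lemma pd_comm {ρ : (Fin 2 → ℝ) → ℝ} (hρ : ContDiff ℝ 2 ρ) (x : Fin 2 → ℝ) :
    pd 0 (pd 1 ρ) x = pd 1 (pd 0 ρ) x := by
  have hd : Differentiable ℝ ρ := hρ.differentiable two_ne_zero
  have hf : ContDiff ℝ 1 (fderiv ℝ ρ) := hρ.fderiv_right (le_refl 2)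
  have hfd : DifferentiableAt ℝ (fderiv ℝ ρ) x := hf.differentiable one_ne_zero x
  have hsymm := second_derivative_symmetric (fun y => (hd y).hasFDerivAt)
    hfd.hasFDerivAt (Pi.single (0:Fin 2) (1:ℝ)) (Pi.single 1 (1:ℝ))
  have key : ∀ i j : Fin 2, pd i (pd j ρ) x
      = fderiv ℝ (fderiv ℝ ρ) x (Pi.single i (1:ℝ)) (Pi.single j (1:ℝ)) := by
    intro i j
    have hpj : pd j ρ = fun y => fderiv ℝ ρ y (Pi.single j (1:ℝ)) :=
      funext fun y => pd_eq_fderiv (hd y)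
    have hA : HasFDerivAt (fun y => fderiv ℝ ρ y (Pi.single j (1:ℝ)))
        ((ContinuousLinearMap.apply ℝ ℝ (Pi.single j (1:ℝ))).comp
          (fderiv ℝ (fderiv ℝ ρ) x)) x := by
      have h := ((ContinuousLinearMap.apply ℝ ℝ (Pi.single j (1:ℝ))
          : ((Fin 2 → ℝ) →L[ℝ] ℝ) →L[ℝ] ℝ)).hasFDerivAt.comp x hfd.hasFDerivAt
      exact h
    rw [hpj, pd_eq_fderiv hA.differentiableAt, hA.fderiv]
    rfl
  rw [key 0 1, key 1 0, hsymm]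

/-- General solution of the 2-dimensional Riemann-Lanczos problem with the differential
gauge condition imposed, in the characteristic coordinates of `ds² = −e^{2ρ} dx¹ dx²`:
`(L₁₂₁, L₁₂₂)` solves (E1) and (E2) everywhere iff
`L₁₂₁ = e^{2ρ} f₁(x¹) − (1/4) e^{2ρ} ∂₁ρ` and `L₁₂₂ = e^{2ρ} f₂(x²) + (1/4) e^{2ρ} ∂₂ρ`
for some functions `f₁, f₂ : ℝ → ℝ`.  Coordinate `xⁱ` corresponds to index `i - 1 : Fin 2`. -/
theorem riemann_lanczos_2d_general_solution
    (ρ L121 L122 : (Fin 2 → ℝ) → ℝ)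
    (hρ : ContDiff ℝ 2 ρ) (hL121 : ContDiff ℝ 1 L121) (hL122 : ContDiff ℝ 1 L122) :
    ((∀ x : Fin 2 → ℝ,
        -Real.exp (2 * ρ x) * pd 0 (pd 1 ρ) x + 4 * L121 x * pd 1 ρ x
          - 4 * L122 x * pd 0 ρ x - 2 * pd 1 L121 x + 2 * pd 0 L122 x = 0) ∧
     (∀ x : Fin 2 → ℝ,
        2 * L121 x * pd 1 ρ x + 2 * L122 x * pd 0 ρ x
          - pd 1 L121 x - pd 0 L122 x = 0)) ↔
    (∃ f₁ f₂ : ℝ → ℝ, ∀ x : Fin 2 → ℝ,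
        L121 x = Real.exp (2 * ρ x) * f₁ (x 0)
          - (1/4) * Real.exp (2 * ρ x) * pd 0 ρ x ∧
        L122 x = Real.exp (2 * ρ x) * f₂ (x 1)
          + (1/4) * Real.exp (2 * ρ x) * pd 1 ρ x) := by
  have hd : Differentiable ℝ ρ := hρ.differentiable two_ne_zero
  have hdL1 : Differentiable ℝ L121 := hL121.differentiable one_ne_zero
  have hdL2 : Differentiable ℝ L122 := hL122.differentiable one_ne_zero
  have hp0 : Differentiable ℝ (pd 0 ρ) := (contDiff_pd hρ 0).differentiable one_ne_zero
  have hp1 : Differentiable ℝ (pd 1 ρ) := (contDiff_pd hρ 1).differentiable one_ne_zero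
  constructor
  · rintro ⟨h1, h2⟩
    have eqA : ∀ z, pd 1 L121 z
        = 2 * L121 z * pd 1 ρ z - (1/4) * Real.exp (2 * ρ z) * pd 0 (pd 1 ρ) z := by
      intro z; linear_combination (-1/4 : ℝ) * h1 z - (1/2 : ℝ) * h2 z
    have eqB : ∀ z, pd 0 L122 z
        = 2 * L122 z * pd 0 ρ z + (1/4) * Real.exp (2 * ρ z) * pd 0 (pd 1 ρ) z := by
      intro z; linear_combination (1/4 : ℝ) * h1 z - (1/2 : ℝ) * h2 z
    refine ⟨fun a => L121 ![a, 0] * Real.exp (-(2 * ρ ![a, 0])) + (1/4) * pd 0 ρ ![a, 0],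
           fun b => L122 ![0, b] * Real.exp (-(2 * ρ ![0, b])) - (1/4) * pd 1 ρ ![0, b],
           fun x => ?_⟩
    constructor
    · -- L121
      set F : ℝ → ℝ := fun t =>
        L121 (Function.update x 1 t) * Real.exp (-(2 * ρ (Function.update x 1 t)))
          + (1/4) * pd 0 ρ (Function.update x 1 t) with hF
      have hder : ∀ t, HasDerivAt F 0 t := by
        intro t
        set z := Function.update x 1 t with hz
        have hρt : HasDerivAt (fun s => ρ (Function.update x 1 s)) (pd 1 ρ z) t :=
          hasDerivAt_pd (hd z)
        have hLt : HasDerivAt (fun s => L121 (Function.update x 1 s)) (pd 1 L121 z) t :=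
          hasDerivAt_pd (hdL1 z)
        have hqt : HasDerivAt (fun s => pd 0 ρ (Function.update x 1 s))
            (pd 1 (pd 0 ρ) z) t := hasDerivAt_pd (hp0 z)
        have hexp : HasDerivAt (fun s => Real.exp (-(2 * ρ (Function.update x 1 s))))
            (Real.exp (-(2 * ρ z)) * (-(2 * pd 1 ρ z))) t := by
          exact ((hρt.const_mul (2:ℝ)).neg).exp
        have hcomb := (hLt.mul hexp).add (hqt.const_mul (1/4 : ℝ))
        have hval : pd 1 L121 z * Real.exp (-(2 * ρ z))
            + L121 z * (Real.exp (-(2 * ρ z)) * (-(2 * pd 1 ρ z)))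
            + (1/4) * pd 1 (pd 0 ρ) z = 0 := by
          rw [eqA z, ← pd_comm hρ z, Real.exp_neg]
          have hne := Real.exp_ne_zero (2 * ρ z)
          field_simp
          ring
        rw [hval] at hcomb
        exact hcomb
      have hconst := is_const_of_deriv_eq_zero
        (fun t => (hder t).differentiableAt) (fun t => (hder t).deriv) (x 1) 0
      have hx1 : Function.update x 1 (x 1) = x := Function.update_eq_self 1 x
      have hx0 : Function.update x 1 0 = ![x 0, 0] := by
        funext j; fin_cases j <;> simp
      rw [hF] at hconst
      simp only [hx1, hx0] at hconst
      -- hconst : L121 x * exp(-(2ρx)) + (1/4) pd0ρ x = f₁ (x 0)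
      have hne := Real.exp_ne_zero (2 * ρ x)
      simp only [Real.exp_neg] at hconst ⊢
      rw [← hconst]
      field_simp
      ring
    · -- L122
      set G : ℝ → ℝ := fun t =>
        L122 (Function.update x 0 t) * Real.exp (-(2 * ρ (Function.update x 0 t)))
          - (1/4) * pd 1 ρ (Function.update x 0 t) with hG
      have hder : ∀ t, HasDerivAt G 0 t := by
        intro t
        set z := Function.update x 0 t with hz
        have hρt : HasDerivAt (fun s => ρ (Function.update x 0 s)) (pd 0 ρ z) t :=
          hasDerivAt_pd (hd z)
        have hLt : HasDerivAt (fun s => L122 (Function.update x 0 s)) (pd 0 L122 z) t :=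
          hasDerivAt_pd (hdL2 z)
        have hqt : HasDerivAt (fun s => pd 1 ρ (Function.update x 0 s))
            (pd 0 (pd 1 ρ) z) t := hasDerivAt_pd (hp1 z)
        have hexp : HasDerivAt (fun s => Real.exp (-(2 * ρ (Function.update x 0 s))))
            (Real.exp (-(2 * ρ z)) * (-(2 * pd 0 ρ z))) t := by
          exact ((hρt.const_mul (2:ℝ)).neg).exp
        have hcomb := (hLt.mul hexp).sub (hqt.const_mul (1/4 : ℝ))
        have hval : pd 0 L122 z * Real.exp (-(2 * ρ z))
            + L122 z * (Real.exp (-(2 * ρ z)) * (-(2 * pd 0 ρ z)))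
            - (1/4) * pd 0 (pd 1 ρ) z = 0 := by
          rw [eqB z, Real.exp_neg]
          have hne := Real.exp_ne_zero (2 * ρ z)
          field_simp
          ring
        rw [hval] at hcomb
        exact hcomb
      have hconst := is_const_of_deriv_eq_zero
        (fun t => (hder t).differentiableAt) (fun t => (hder t).deriv) (x 0) 0
      have hx1 : Function.update x 0 (x 0) = x := Function.update_eq_self 0 x
      have hx0 : Function.update x 0 0 = ![0, x 1] := by
        funext j; fin_cases j <;> simp
      rw [hG] at hconst
      simp only [hx1, hx0] at hconst
      have hne := Real.exp_ne_zero (2 * ρ x)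
      simp only [Real.exp_neg] at hconst ⊢
      rw [← hconst]
      field_simp
      ring
  · rintro ⟨f₁, f₂, hf⟩
    have hQ : ∀ x, pd 1 (pd 0 ρ) x = pd 0 (pd 1 ρ) x := fun x => (pd_comm hρ x).symm
    -- compute pd 1 L121
    have hd1L1 : ∀ x : Fin 2 → ℝ, pd 1 L121 x
        = Real.exp (2 * ρ x) * (2 * pd 1 ρ x) * f₁ (x 0)
          - (1/4) * (Real.exp (2 * ρ x) * (2 * pd 1 ρ x) * pd 0 ρ x
            + Real.exp (2 * ρ x) * pd 1 (pd 0 ρ) x) := by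
      intro x
      have hρt : HasDerivAt (fun s => ρ (Function.update x 1 s)) (pd 1 ρ x) (x 1) :=
        hasDerivAt_pd' (hd x)
      have hqt : HasDerivAt (fun s => pd 0 ρ (Function.update x 1 s))
          (pd 1 (pd 0 ρ) x) (x 1) := hasDerivAt_pd' (hp0 x)
      have hexp : HasDerivAt (fun s => Real.exp (2 * ρ (Function.update x 1 s)))
          (Real.exp (2 * ρ x) * (2 * pd 1 ρ x)) (x 1) := by
        have h := (hρt.const_mul (2:ℝ)).exp
        rwa [Function.update_eq_self] at h
      have hcomb := (hexp.mul_const (f₁ (x 0))).sub ((hexp.mul hqt).const_mul (1/4 : ℝ))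
      simp only [Function.update_eq_self] at hcomb
      have hfun : (fun t => L121 (Function.update x 1 t))
          = fun t => Real.exp (2 * ρ (Function.update x 1 t)) * f₁ (x 0)
            - (1/4) * (Real.exp (2 * ρ (Function.update x 1 t))
              * pd 0 ρ (Function.update x 1 t)) := by
        funext t
        have := (hf (Function.update x 1 t)).1
        rw [Function.update_of_ne (by decide : (0:Fin 2) ≠ 1)] at this
        rw [this]; ring
      have hpd : pd 1 L121 x = deriv (fun t => L121 (Function.update x 1 t)) (x 1) := rfl
      rw [hpd, hfun]; exact hcomb.deriv
    have hd0L2 : ∀ x : Fin 2 → ℝ, pd 0 L122 x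
        = Real.exp (2 * ρ x) * (2 * pd 0 ρ x) * f₂ (x 1)
          + (1/4) * (Real.exp (2 * ρ x) * (2 * pd 0 ρ x) * pd 1 ρ x
            + Real.exp (2 * ρ x) * pd 0 (pd 1 ρ) x) := by
      intro x
      have hρt : HasDerivAt (fun s => ρ (Function.update x 0 s)) (pd 0 ρ x) (x 0) :=
        hasDerivAt_pd' (hd x)
      have hqt : HasDerivAt (fun s => pd 1 ρ (Function.update x 0 s))
          (pd 0 (pd 1 ρ) x) (x 0) := hasDerivAt_pd' (hp1 x)
      have hexp : HasDerivAt (fun s => Real.exp (2 * ρ (Function.update x 0 s)))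
          (Real.exp (2 * ρ x) * (2 * pd 0 ρ x)) (x 0) := by
        have h := (hρt.const_mul (2:ℝ)).exp
        rwa [Function.update_eq_self] at h
      have hcomb := (hexp.mul_const (f₂ (x 1))).add ((hexp.mul hqt).const_mul (1/4 : ℝ))
      simp only [Function.update_eq_self] at hcomb
      have hfun : (fun t => L122 (Function.update x 0 t))
          = fun t => Real.exp (2 * ρ (Function.update x 0 t)) * f₂ (x 1)
            + (1/4) * (Real.exp (2 * ρ (Function.update x 0 t))
              * pd 1 ρ (Function.update x 0 t)) := by
        funext t
        have := (hf (Function.update x 0 t)).2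
        rw [Function.update_of_ne (by decide : (1:Fin 2) ≠ 0)] at this
        rw [this]; ring
      have hpd : pd 0 L122 x = deriv (fun t => L122 (Function.update x 0 t)) (x 0) := rfl
      rw [hpd, hfun]; exact hcomb.deriv
    constructor
    · intro x
      rw [hd1L1 x, hd0L2 x, (hf x).1, (hf x).2, hQ x]
      ring
    · intro x
      rw [hd1L1 x, hd0L2 x, (hf x).1, (hf x).2, hQ x]
      ring
end

section
/- Let ρ : ℝ² → ℝ be twice continuously differentiable and let L₁₂₁, L₁₂₂ : ℝ² → ℝ be continuously differentiable functions satisfying at every point the two equations (E1) −e^{2ρ}∂₁∂₂ρ + 4L₁₂₁∂₂ρ − 4L₁₂₂∂₁ρ − 2∂₂L₁₂₁ + 2∂₁L₁₂₂ = 0 and (E2) 2L₁₂₁∂₂ρ + 2L₁₂₂∂₁ρ − ∂₂L₁₂₁ − ∂₁L₁₂₂ = 0. Then the function (x¹,x²) ↦ e^{−2ρ(x¹,x²)} L₁₂₂(x¹,x²) − (1/4) ∂₂ρ(x¹,x²) has vanishing partial derivative with respect to x¹ at every point of ℝ²; equivalently, e^{−2ρ} L₁₂₂ − (1/4) ∂₂ρ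 depends only on x². -/
lemma pd_hasDerivAt {f : (Fin 2 → ℝ) → ℝ} {x : Fin 2 → ℝ}
    (hf : DifferentiableAt ℝ f x) (i : Fin 2) :
    HasDerivAt (fun t => f (Function.update x i t))
      (fderiv ℝ f x (Pi.single i 1)) (x i) := by
  have hu := hasDerivAt_update x i (x i)
  have hl : HasFDerivAt f (fderiv ℝ f x) (Function.update x i (x i)) := by
    rw [Function.update_eq_self]; exact hf.hasFDerivAt
  exact hl.comp_hasDerivAt (x i) hu

lemma pd_eq {f : (Fin 2 → ℝ) → ℝ} {x : Fin 2 → ℝ}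
    (hf : DifferentiableAt ℝ f x) (i : Fin 2) :
    pd i f x = fderiv ℝ f x (Pi.single i 1) :=
  (pd_hasDerivAt hf i).deriv

/-- If `(L₁₂₁, L₁₂₂)` solves the 2-dimensional Riemann-Lanczos system (E1), (E2)
(with the differential gauge condition) for a C² conformal factor `ρ`, then
`e^{−2ρ} L₁₂₂ − (1/4) ∂₂ρ` has vanishing `x¹`-partial derivative everywhere,
i.e. it depends only on `x²`.  Coordinate `xⁱ` corresponds to `i - 1 : Fin 2`. -/
theorem riemann_lanczos_2d_L122_profile
    (ρ L121 L122 : (Fin 2 → ℝ) → ℝ)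
    (hρ : ContDiff ℝ 2 ρ) (hL121 : ContDiff ℝ 1 L121) (hL122 : ContDiff ℝ 1 L122)
    (hE1 : ∀ x : Fin 2 → ℝ,
      -Real.exp (2 * ρ x) * pd 0 (pd 1 ρ) x + 4 * L121 x * pd 1 ρ x
        - 4 * L122 x * pd 0 ρ x - 2 * pd 1 L121 x + 2 * pd 0 L122 x = 0)
    (hE2 : ∀ x : Fin 2 → ℝ,
      2 * L121 x * pd 1 ρ x + 2 * L122 x * pd 0 ρ x
        - pd 1 L121 x - pd 0 L122 x = 0) :
    ∀ x : Fin 2 → ℝ,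
      pd 0 (fun y => Real.exp (-(2 * ρ y)) * L122 y - (1/4) * pd 1 ρ y) x = 0 := by
  have hρd : Differentiable ℝ ρ := hρ.differentiable (by norm_num)
  have hLd : Differentiable ℝ L122 := hL122.differentiable (by norm_num)
  set F1 : (Fin 2 → ℝ) → ℝ := fun y => fderiv ℝ ρ y (Pi.single 1 1) with hF1def
  have hF1 : ContDiff ℝ 1 F1 :=
    (hρ.fderiv_right (by norm_num)).clm_apply contDiff_const
  have hF1d : Differentiable ℝ F1 := hF1.differentiable (by norm_num)
  have hpd1ρ : pd 1 ρ = F1 := funext fun y => pd_eq (hρd y) 1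
  intro x
  set a := fderiv ℝ ρ x (Pi.single (0 : Fin 2) 1) with ha
  set b := fderiv ℝ L122 x (Pi.single (0 : Fin 2) 1) with hb
  set c := fderiv ℝ F1 x (Pi.single (0 : Fin 2) 1) with hc
  have hR : HasDerivAt (fun t => ρ (Function.update x 0 t)) a (x 0) :=
    pd_hasDerivAt (hρd x) 0
  have hL : HasDerivAt (fun t => L122 (Function.update x 0 t)) b (x 0) :=
    pd_hasDerivAt (hLd x) 0
  have hP : HasDerivAt (fun t => F1 (Function.update x 0 t)) c (x 0) :=
    pd_hasDerivAt (hF1d x) 0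
  have hux : Function.update x 0 (x 0) = x := Function.update_eq_self _ _
  have hexp : HasDerivAt (fun t => Real.exp (-(2 * ρ (Function.update x 0 t))))
      (Real.exp (-(2 * ρ x)) * -(2 * a)) (x 0) := by
    have := ((hR.const_mul (2 : ℝ)).neg).exp
    simp only [Pi.neg_apply] at this
    rwa [hux] at this
  have key : HasDerivAt
      (fun t => Real.exp (-(2 * ρ (Function.update x 0 t)))
        * L122 (Function.update x 0 t) - 1/4 * F1 (Function.update x 0 t))
      (Real.exp (-(2 * ρ x)) * -(2 * a) * L122 x
        + Real.exp (-(2 * ρ x)) * b - 1/4 * c) (x 0) := by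
    have h1 := (hexp.mul hL).sub (hP.const_mul (1/4 : ℝ))
    rwa [hux] at h1
  have hgoal : pd 0 (fun y => Real.exp (-(2 * ρ y)) * L122 y - (1/4) * pd 1 ρ y) x
      = Real.exp (-(2 * ρ x)) * -(2 * a) * L122 x
        + Real.exp (-(2 * ρ x)) * b - 1/4 * c := by
    simp only [hpd1ρ]
    simp only [pd]
    exact key.deriv
  rw [hgoal]
  -- now pure algebra from E1, E2
  have hE1x := hE1 x
  have hE2x := hE2 x
  rw [hpd1ρ] at hE1x hE2x
  rw [pd_eq (hρd x) 0, ← ha] at hE1x hE2x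
  rw [pd_eq (hLd x) 0, ← hb] at hE1x hE2x
  rw [pd_eq (hF1d x) 0, ← hc] at hE1x
  have hexp1 : Real.exp (-(2 * ρ x)) * Real.exp (2 * ρ x) = 1 := by
    rw [← Real.exp_add]; simp
  linear_combination (Real.exp (-(2 * ρ x)) / 4) * hE1x
    - (Real.exp (-(2 * ρ x)) / 2) * hE2x + (c / 4) * hexp1
end
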